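/- Let π^ξ : Γ → Γ_∼ be a regular ξ-fibration with distinguished vertex e, let [v] be a class and y ∈ [v], and assume that ξ_y ∘ f^{[v],[e]}_l maps the multiset L_{[v]} bijectively onto the multiset obtained from L_{[v]} by replacing γ by −γ exactly for the elements whose image under f^{[v],[e]}_l lies in N_y^ξ. Then the following identities hold: ξ_y(∏_{β∈f^{[v],[e]}_l(L_{[v]})} x_β) = (∏_{γ∈L_{[v]}} x_γ) · ∏_{β∈N_y^ξ} (−e^{−ξ_y(β)}) in ℤ[Λ], and ξ_y(∏_{β∈f^{[v],[e]}_l(L_{[v]})} β) = (−1)^{#N_y^ξ} · ∏_{γ∈L_{[v]}} γ in S*(Λ). -/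

import Mathlib

noncomputable section

/-- A moment graph on a lattice `Λ`: a poset of vertices (the order given as a
relation with axioms), a set of directed edges `E ⊆ V × V`, and a label function
assigning to each edge a nonzero element of `Λ`, such that edges respect the
order and are not loops. -/
structure MomentGraph (Λ : Type*) [AddCommGroup Λ] (V : Type*) where
  le : V → V → Prop
  le_refl : ∀ v, le v v
  le_trans : ∀ u v w, le u v → le v w → le u w
  le_antisymm : ∀ v w, le v w → le w v → v = w
  E : V → V → Prop
  label : V → V → Λ
  label_ne_zero : ∀ {v w}, E v w → label v w ≠ 0
  le_of_E : ∀ {v w}, E v w → le v w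
  ne_of_E : ∀ {v w}, E v w → v ≠ w

namespace MomentGraph

variable {Λ : Type*} [AddCommGroup Λ] {V V' : Type*}

/-- Underlying (unoriented) adjacency `v — w`. -/
def Adj (G : MomentGraph Λ V) (v w : V) : Prop := G.E v w ∨ G.E w v

open Classical in
/-- The label of the unoriented edge `v — w` (there are no multiple edges, so this
is well defined on adjacent pairs). -/
def albl (G : MomentGraph Λ V) (v w : V) : Λ := if G.E v w then G.label v w else G.label w v

/-- A morphism of moment graphs on the same lattice `Λ` (Definition 2.3):
a poset morphism on vertices sending edges to edges or collapsing them (MR1),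
together with a `ℤ`-linear automorphism of `Λ` for every vertex satisfying
(MR2)(a) and (MR2)(b). -/
structure Hom (G : MomentGraph Λ V) (G' : MomentGraph Λ V') where
  toFun : V → V'
  mono : ∀ {v w}, G.le v w → G'.le (toFun v) (toFun w)
  adj : ∀ {v w}, G.Adj v w → G'.Adj (toFun v) (toFun w) ∨ toFun v = toFun w
  aut : V → (Λ ≃ₗ[ℤ] Λ)
  label_pm : ∀ {v w}, G.Adj v w → toFun v ≠ toFun w →
      aut v (G.albl v w) = G'.albl (toFun v) (toFun w) ∨
      aut v (G.albl v w) = - G'.albl (toFun v) (toFun w)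
  compat : ∀ {v w}, G.Adj v w → toFun v ≠ toFun w → ∀ μ : Λ,
      ∃ n : ℤ, aut v μ - aut w μ = n • G'.albl (toFun v) (toFun w)

/-- A morphism of moment graphs is an isomorphism if it has a two-sided inverse
morphism, inverting both the vertex map and the label automorphisms. -/
def Hom.IsIso {G : MomentGraph Λ V} {G' : MomentGraph Λ V'} (f : G.Hom G') : Prop :=
  ∃ g : G'.Hom G, (∀ v, g.toFun (f.toFun v) = v) ∧ (∀ v', f.toFun (g.toFun v') = v') ∧
    ∀ v (μ : Λ), g.aut (f.toFun v) (f.aut v μ) = μ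

/-- A `Γ`-monodromy: a collection of lattice automorphisms `ξ_v` with
`ξ_v(λ) - ξ_w(λ) ∈ l(v → w)·ℤ` for all edges `v → w`. -/
def Monodromy (G : MomentGraph Λ V) (ξ : V → (Λ ≃ₗ[ℤ] Λ)) : Prop :=
  ∀ {v w}, G.E v w → ∀ μ : Λ, ∃ n : ℤ, ξ v μ - ξ w μ = n • G.label v w

/-- A `Γ`-compatible equivalence relation (EQV1) and (EQV2). -/
def Compatible (G : MomentGraph Λ V) (s : Setoid V) : Prop :=
  (∀ ⦃v w u⦄, s.r v w → G.le v u → G.le u w → s.r v u) ∧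
  (∀ ⦃v₁ w₁⦄, G.E v₁ w₁ → ¬ s.r v₁ w₁ → ∀ v₂, s.r v₂ v₁ →
    (∃! w₂, s.r w₂ w₁ ∧ G.E v₂ w₂) ∧
    (∀ w₂, s.r w₂ w₁ → G.E v₂ w₂ → G.label v₂ w₂ = G.label v₁ w₁))

/-- Edges of the quotient graph: `[v] → [w]` iff `v ≁ w` and there are
representatives joined by an edge. -/
def QE (G : MomentGraph Λ V) (s : Setoid V) (a b : Quotient s) : Prop :=
  a ≠ b ∧ ∃ v w, Quotient.mk s v = a ∧ Quotient.mk s w = b ∧ G.E v w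

open Classical in
/-- The label of a quotient edge, via a choice of representatives. -/
def Qlabel (G : MomentGraph Λ V) (s : Setoid V) (a b : Quotient s) : Λ :=
  if h : ∃ v, ∃ w, Quotient.mk s v = a ∧ Quotient.mk s w = b ∧ G.E v w
  then G.label h.choose h.choose_spec.choose else 0

/-- The covering relation of the vertex poset. -/
def cov (G : MomentGraph Λ V) (v w : V) : Prop :=
  G.le v w ∧ v ≠ w ∧ ∀ u, G.le v u → G.le u w → u = v ∨ u = w

/-- A special matching of the vertex poset (Definition of Brenti): a bijection `M`
such that `M(v)` covers or is covered by `v`, and if `M(v) ≠ w` and `v ⋖ w`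
then `M(v) ≤ M(w)`. -/
def SpecialMatching (G : MomentGraph Λ V) (M : V → V) : Prop :=
  Function.Bijective M ∧ (∀ v, G.cov (M v) v ∨ G.cov v (M v)) ∧
  (∀ v w, M v ≠ w → G.cov v w → G.le (M v) (M w))

end MomentGraph

noncomputable section StructureAlgebras

/-- The generic "structure algebra" construction: given an edge relation `E` on `V`
and an `A`-valued function `lab` (the image of the label of each edge in `A`),
this is the subalgebra of `∏_{v ∈ V} A` of tuples `(z_v)` with
`z_v - z_w ∈ lab v w · A` for every edge `v → w`, with coordinate-wise operations
and with `A` acting diagonally. -/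
def structAlg {V : Type*} {A : Type*} [CommRing A] (E : V → V → Prop) (lab : V → V → A) :
    Subalgebra A (V → A) where
  carrier := {z | ∀ ⦃v w⦄, E v w → ∃ t, z v - z w = lab v w * t}
  mul_mem' := by
    intro a b ha hb v w h
    obtain ⟨t, ht⟩ := ha h
    obtain ⟨t', ht'⟩ := hb h
    refine ⟨a v * t' + t * b w, ?_⟩
    simp only [Pi.mul_apply]
    linear_combination a v * ht' + b w * ht
  one_mem' := by intro v w h; exact ⟨0, by simp⟩
  add_mem' := by
    intro a b ha hb v w h
    obtain ⟨t, ht⟩ := ha h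
    obtain ⟨t', ht'⟩ := hb h
    refine ⟨t + t', ?_⟩
    simp only [Pi.add_apply]
    linear_combination ht + ht'
  zero_mem' := by intro v w h; exact ⟨0, by simp⟩
  algebraMap_mem' := by
    intro r v w h
    exact ⟨0, by simp⟩

set_option synthInstance.maxHeartbeats 4000000 in
instance structAlgAddCommGroup {V A : Type*} [CommRing A] (E : V → V → Prop)
    (lab : V → V → A) : AddCommGroup (structAlg E lab) :=
  inferInstance

set_option synthInstance.maxHeartbeats 4000000 in
instance structAlgModule {V A : Type*} [CommRing A] (E : V → V → Prop)
    (lab : V → V → A) : Module A (structAlg E lab) :=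
  inferInstance

/-- The group ring `ℤ[Λ]`. -/
abbrev GrpRing (Λ : Type*) [AddCommGroup Λ] := AddMonoidAlgebra ℤ Λ

variable {Λ : Type*} [AddCommGroup Λ]

/-- The basis element `e^μ` of the group ring `ℤ[Λ]`. -/
def grExp (μ : Λ) : GrpRing Λ := AddMonoidAlgebra.single μ 1

/-- The element `x_μ = 1 - e^{-μ}` of the group ring `ℤ[Λ]`. -/
def grX (μ : Λ) : GrpRing Λ := 1 - grExp (-μ)

/-- The augmentation `ℤ[Λ] → ℤ`, `e^λ ↦ 1`. -/
def grAug (Λ : Type*) [AddCommGroup Λ] : GrpRing Λ →+* ℤ :=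
  ((AddMonoidAlgebra.lift ℤ ℤ Λ) 1).toRingHom

/-- The augmentation ideal `I_m ⊂ ℤ[Λ]`. -/
def Im (Λ : Type*) [AddCommGroup Λ] : Ideal (GrpRing Λ) := RingHom.ker (grAug Λ)

/-- The multiplicative structure algebra of edge data `(E, lab)`:
tuples `(z_v)` of elements of `ℤ[Λ]` with `z_v - z_w ∈ x_{lab v w}·ℤ[Λ]`
for all edges. -/
abbrev ZmOf {V : Type*} (E : V → V → Prop) (lab : V → V → Λ) :
    Subalgebra (GrpRing Λ) (V → GrpRing Λ) :=
  structAlg E fun v w => grX (lab v w)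

/-- The multiplicative structure algebra `Z_m(Γ)` of a moment graph. -/
abbrev MomentGraph.Zm {V : Type*} (G : MomentGraph Λ V) :
    Subalgebra (GrpRing Λ) (V → GrpRing Λ) :=
  ZmOf G.E G.label

/-- Index type of a chosen basis of the lattice `Λ`. -/
abbrev bIdx (Λ : Type*) [AddCommGroup Λ] [Module.Free ℤ Λ] [Module.Finite ℤ Λ] :=
  Module.Free.ChooseBasisIndex ℤ Λ

/-- A model of the symmetric algebra `S^*(Λ)` over `ℤ`: the polynomial ring on a
basis of `Λ`. -/
abbrev SymZ (Λ : Type*) [AddCommGroup Λ] [Module.Free ℤ Λ] [Module.Finite ℤ Λ] :=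
  MvPolynomial (bIdx Λ) ℤ

variable [Module.Free ℤ Λ] [Module.Finite ℤ Λ]

/-- The canonical embedding `Λ → S^*(Λ)` (degree-one part). -/
def iotaZ (Λ : Type*) [AddCommGroup Λ] [Module.Free ℤ Λ] [Module.Finite ℤ Λ] :
    Λ →ₗ[ℤ] SymZ Λ :=
  (Finsupp.linearCombination ℤ fun i => (MvPolynomial.X i : SymZ Λ)).comp
    (Module.Free.chooseBasis ℤ Λ).repr.toLinearMap

/-- The additive structure algebra of edge data `(E, lab)`:
tuples `(z_v)` of elements of `S^*(Λ)` with `z_v - z_w ∈ l(v→w)·S^*(Λ)`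
for all edges. -/
abbrev ZaOf {V : Type*} (E : V → V → Prop) (lab : V → V → Λ) :
    Subalgebra (SymZ Λ) (V → SymZ Λ) :=
  structAlg E fun v w => iotaZ Λ (lab v w)

/-- The additive structure algebra `Z_a(Γ)` of a moment graph. -/
abbrev MomentGraph.Za {V : Type*} (G : MomentGraph Λ V) :
    Subalgebra (SymZ Λ) (V → SymZ Λ) :=
  ZaOf G.E G.label

end StructureAlgebras

noncomputable section Fibrations

namespace MomentGraph

variable {Λ : Type*} [AddCommGroup Λ] {V : Type*}

/-- The data of a fibration `π : Γ → Γ_∼` (Definition of fibration): for any two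
classes `[v], [w]` an isomorphism of moment graphs between the fibres `Γ_{[v]}`
and `Γ_{[w]}` (full subgraphs on the classes), given by a vertex bijection
`f v w` and a single label automorphism `fl v w` (FB2), compatible with change of
representatives and satisfying the cocycle conditions (FB1). -/
structure Fib (G : MomentGraph Λ V) (s : Setoid V) where
  f : V → V → V → V
  fl : V → V → (Λ ≃ₗ[ℤ] Λ)
  maps_class : ∀ ⦃v w y⦄, s.r y v → s.r (f v w y) w
  f_congr : ∀ ⦃v v' w w' y⦄, s.r v v' → s.r w w' → s.r y v → f v w y = f v' w' y
  fl_congr : ∀ ⦃v v' w w'⦄, s.r v v' → s.r w w' → fl v w = fl v' w'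
  f_id : ∀ ⦃v y⦄, s.r y v → f v v y = y
  f_comp : ∀ ⦃u v w y⦄, s.r y u → f v w (f u v y) = f u w y
  f_mono : ∀ ⦃v w y y'⦄, s.r y v → s.r y' v → G.le y y' → G.le (f v w y) (f v w y')
  f_edge : ∀ ⦃v w y y'⦄, s.r y v → s.r y' v → G.E y y' → G.E (f v w y) (f v w y')
  f_label : ∀ ⦃v w y y'⦄, s.r y v → s.r y' v → G.E y y' →
    fl v w (G.label y y') = G.label (f v w y) (f v w y') ∨
    fl v w (G.label y y') = - G.label (f v w y) (f v w y')

/-- The set of neighbours of `y` inside its fibre; the multiset `L_{y,∼}` is the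
multiset of labels `G.albl y w` for `w` in this set. -/
def fnbr (G : MomentGraph Λ V) (s : Setoid V) (y : V) : Set V :=
  {w | s.r y w ∧ G.Adj y w}

/-- The set of neighbours of `y` inside its fibre indexing the multiset `N_y^ξ`:
those `w` for which `ξ_y(f^{[v],[e]}_l(l(y—w))) ∈ -L_{y,∼}`; the multiset `N_y^ξ`
is the multiset of `F.fl y e (G.albl y w)` for `w` in this set. -/
def Nset (G : MomentGraph Λ V) (s : Setoid V) (F : G.Fib s) (ξ : V → (Λ ≃ₗ[ℤ] Λ))
    (e : V) (y : V) : Set V :=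
  {w ∈ G.fnbr s y | ∃ w' ∈ G.fnbr s y, ξ y (F.fl y e (G.albl y w)) = - G.albl y w'}

variable [Module.Free ℤ Λ] [Module.Finite ℤ Λ]

/-- Compatibility of the collection `ξ = {ξ_y}` with the fibre `Γ_{[e]}`:
conditions (CF1) (product identity in `S^*(Λ)` and stability of `±L_{y,∼}`) and
(CF2) (parity and divisibility along edges inside a fibre). -/
def FibCompat (G : MomentGraph Λ V) (s : Setoid V) (F : G.Fib s)
    (ξ : V → (Λ ≃ₗ[ℤ] Λ)) (e : V) : Prop :=
  (∀ y : V,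
    (∏ᶠ w ∈ G.fnbr s y, iotaZ Λ (ξ y (F.fl y e (G.albl y w)))) =
      (∏ᶠ w ∈ G.fnbr s y, iotaZ Λ (G.albl y w)) ∨
    (∏ᶠ w ∈ G.fnbr s y, iotaZ Λ (ξ y (F.fl y e (G.albl y w)))) =
      - (∏ᶠ w ∈ G.fnbr s y, iotaZ Λ (G.albl y w))) ∧
  (∀ y : V, ∀ w ∈ G.fnbr s y, ∃ w' ∈ G.fnbr s y,
    ξ y (F.fl y e (G.albl y w)) = G.albl y w' ∨
    ξ y (F.fl y e (G.albl y w)) = - G.albl y w') ∧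
  (∀ ⦃y y'⦄, s.r y y' → G.E y y' →
    ((G.Nset s F ξ e y).ncard % 2 ≠ (G.Nset s F ξ e y').ncard % 2) ∧
    ∃ n : ℤ,
      (∑ᶠ w ∈ G.Nset s F ξ e y, ξ y (F.fl y e (G.albl y w))) -
        (∑ᶠ w ∈ G.Nset s F ξ e y', ξ y' (F.fl y' e (G.albl y' w))) = n • G.label y y')

/-- Regularity of a `ξ`-fibration (multiplicative version): the multiset of
labels `L_{v,∼}` only depends on the class of `v`, each `x_γ` (`γ ∈ L_{[v]}`) is
irreducible in `ℤ[Λ]`, and for distinct `γ, γ' ∈ L_{[v]}`, `x_γ ∣ x_{γ'}·x`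
implies `x_γ ∣ x`. -/
def RegularM (G : MomentGraph Λ V) (s : Setoid V) : Prop :=
  (∀ ⦃v w⦄, s.r v w → ∀ μ : Λ,
    {u ∈ G.fnbr s v | G.albl v u = μ}.ncard = {u ∈ G.fnbr s w | G.albl w u = μ}.ncard) ∧
  (∀ v : V, ∀ w ∈ G.fnbr s v, Irreducible (grX (G.albl v w))) ∧
  (∀ v : V, ∀ w ∈ G.fnbr s v, ∀ w' ∈ G.fnbr s v, G.albl v w ≠ G.albl v w' →
    ∀ t : GrpRing Λ, grX (G.albl v w) ∣ grX (G.albl v w') * t → grX (G.albl v w) ∣ t)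

/-- Regularity of a `ξ`-fibration (additive version, in `S^*(Λ)`). -/
def RegularA (G : MomentGraph Λ V) (s : Setoid V) : Prop :=
  (∀ ⦃v w⦄, s.r v w → ∀ μ : Λ,
    {u ∈ G.fnbr s v | G.albl v u = μ}.ncard = {u ∈ G.fnbr s w | G.albl w u = μ}.ncard) ∧
  (∀ v : V, ∀ w ∈ G.fnbr s v, Irreducible (iotaZ Λ (G.albl v w))) ∧
  (∀ v : V, ∀ w ∈ G.fnbr s v, ∀ w' ∈ G.fnbr s v, G.albl v w ≠ G.albl v w' →
    ∀ t : SymZ Λ, iotaZ Λ (G.albl v w) ∣ iotaZ Λ (G.albl v w') * t → iotaZ Λ (G.albl v w) ∣ t)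

end MomentGraph

end Fibrations

noncomputable section Statements
open MomentGraph
variable {Λ : Type*} [AddCommGroup Λ] [Module.Free ℤ Λ] [Module.Finite ℤ Λ]
variable {V : Type*}


set_option synthInstance.maxHeartbeats 4000000 in
set_option maxHeartbeats 8000000 in
theorem stmt17 (G : MomentGraph Λ V) (s : Setoid V) (hcomp : G.Compatible s)
    (F : G.Fib s) (ξ : V → (Λ ≃ₗ[ℤ] Λ)) (hmon : G.Monodromy ξ) (e : V)
    (hcf : G.FibCompat s F ξ e) (hreg : G.RegularM s)
    (hfin : ∀ v : V, {w | s.r v w}.Finite)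
    (gξ : V → (GrpRing Λ →+* GrpRing Λ))
    (hgξ : ∀ y (μ : Λ), gξ y (grExp μ) = grExp (ξ y μ))
    (v y : V) (hy : s.r y v)
    (σb : V → V) (hσ : Set.BijOn σb (G.fnbr s y) (G.fnbr s y))
    (hsgn : ∀ w ∈ G.fnbr s y,
      (w ∈ G.Nset s F ξ e y → ξ y (F.fl y e (G.albl y w)) = - G.albl y (σb w)) ∧
      (w ∉ G.Nset s F ξ e y → ξ y (F.fl y e (G.albl y w)) = G.albl y (σb w))) :
    gξ y (∏ᶠ w ∈ G.fnbr s y, grX (F.fl y e (G.albl y w))) =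
      (∏ᶠ w ∈ G.fnbr s y, grX (G.albl y w)) *
        (∏ᶠ w ∈ G.Nset s F ξ e y, (- grExp (- (ξ y (F.fl y e (G.albl y w)))))) ∧
    (∏ᶠ w ∈ G.fnbr s y, iotaZ Λ (ξ y (F.fl y e (G.albl y w)))) =
      ((-1 : ℤ) ^ (G.Nset s F ξ e y).ncard) •
        (∏ᶠ w ∈ G.fnbr s y, iotaZ Λ (G.albl y w)) := by

  classical
  have hfn : (G.fnbr s y).Finite := (hfin y).subset (fun w hw => hw.1)
  have hNsub : G.Nset s F ξ e y ⊆ G.fnbr s y := fun w hw => hw.1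
  have hNf : (G.Nset s F ξ e y).Finite := hfn.subset hNsub
  set S := hfn.toFinset with hS
  set N := hNf.toFinset with hN
  have hmemS : ∀ w, w ∈ S ↔ w ∈ G.fnbr s y := fun w => hfn.mem_toFinset
  have hmemN : ∀ w, w ∈ N ↔ w ∈ G.Nset s F ξ e y := fun w => hNf.mem_toFinset
  have hNS : N ⊆ S := fun w hw => (hmemS w).2 (hNsub ((hmemN w).1 hw))
  have hcoeS : (S : Set V) = G.fnbr s y := hfn.coe_toFinset
  have hcoeN : (N : Set V) = G.Nset s F ξ e y := hNf.coe_toFinset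
  have fpS : ∀ (f : V → GrpRing Λ), (∏ᶠ w ∈ G.fnbr s y, f w) = ∏ w ∈ S, f w := by
    intro f; rw [← hcoeS, finprod_mem_coe_finset]
  have fpN : ∀ (f : V → GrpRing Λ), (∏ᶠ w ∈ G.Nset s F ξ e y, f w) = ∏ w ∈ N, f w := by
    intro f; rw [← hcoeN, finprod_mem_coe_finset]
  have fpS' : ∀ (f : V → SymZ Λ), (∏ᶠ w ∈ G.fnbr s y, f w) = ∏ w ∈ S, f w := by
    intro f; rw [← hcoeS, finprod_mem_coe_finset]
  have hmulExp : ∀ a b : Λ, grExp a * grExp b = grExp (a + b) := by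
    intro a b
    simp [grExp, AddMonoidAlgebra.single_mul_single]
  have hexp0 : grExp (0 : Λ) = 1 := rfl
  have hgX : ∀ μ : Λ, gξ y (grX μ) = grX (ξ y μ) := by
    intro μ
    simp only [grX, map_sub, map_one, hgξ, map_neg]
  have hgXneg : ∀ γ : Λ, grX (-γ) = (- grExp γ) * grX γ := by
    intro γ
    have h1 : grExp γ * grExp (-γ) = 1 := by
      rw [hmulExp, add_neg_cancel, hexp0]
    simp only [grX, neg_neg]
    linear_combination -h1
  -- bijection facts on S
  have hσS : ∀ w ∈ S, σb w ∈ S :=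
    fun w hw => (hmemS _).2 (hσ.mapsTo ((hmemS w).1 hw))
  have hσinj : Set.InjOn σb S := fun a ha b hb h =>
    hσ.injOn ((hmemS a).1 ha) ((hmemS b).1 hb) h
  have hσsurj : ∀ w ∈ S, ∃ a ∈ S, σb a = w := by
    intro w hw
    obtain ⟨a, ha, hae⟩ := hσ.surjOn ((hmemS w).1 hw)
    exact ⟨a, (hmemS a).2 ha, hae⟩
  have hfilter : S.filter (fun w => w ∈ N) = N := by
    rw [Finset.filter_mem_eq_inter, Finset.inter_eq_right.mpr hNS]
  constructor
  · -- multiplicative part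
    rw [fpS, fpS, fpN, map_prod]
    have step1 : ∀ w ∈ S, gξ y (grX (F.fl y e (G.albl y w))) =
        grX (G.albl y (σb w)) *
          (if w ∈ N then - grExp (- (ξ y (F.fl y e (G.albl y w)))) else 1) := by
      intro w hw
      have hwL := (hmemS w).1 hw
      rw [hgX]
      by_cases hwN : w ∈ N
      · have hval := (hsgn w hwL).1 ((hmemN w).1 hwN)
        rw [if_pos hwN, hval, hgXneg, neg_neg]
        ring
      · have hval := (hsgn w hwL).2 (fun h => hwN ((hmemN w).2 h))
        rw [if_neg hwN, hval, mul_one]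
    rw [Finset.prod_congr rfl step1, Finset.prod_mul_distrib]
    congr 1
    · exact Finset.prod_nbij σb hσS hσinj hσsurj (fun a _ => rfl)
    · rw [← Finset.prod_filter, hfilter]
  · -- additive part
    rw [fpS', fpS']
    have step1 : ∀ w ∈ S, iotaZ Λ (ξ y (F.fl y e (G.albl y w))) =
        (if w ∈ N then (-1 : SymZ Λ) else 1) * iotaZ Λ (G.albl y (σb w)) := by
      intro w hw
      have hwL := (hmemS w).1 hw
      by_cases hwN : w ∈ N
      · have hval := (hsgn w hwL).1 ((hmemN w).1 hwN)
        rw [if_pos hwN, hval, map_neg, neg_one_mul]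
      · have hval := (hsgn w hwL).2 (fun h => hwN ((hmemN w).2 h))
        rw [if_neg hwN, hval, one_mul]
    rw [Finset.prod_congr rfl step1, Finset.prod_mul_distrib]
    have h2 : (∏ w ∈ S, (if w ∈ N then (-1 : SymZ Λ) else 1)) = (-1 : SymZ Λ) ^ N.card := by
      rw [← Finset.prod_filter, hfilter, Finset.prod_const]
    have h3 : (G.Nset s F ξ e y).ncard = N.card := Set.ncard_eq_toFinset_card _ hNf
    have h4 : (∏ w ∈ S, iotaZ Λ (G.albl y (σb w))) = ∏ w ∈ S, iotaZ Λ (G.albl y w) :=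
      Finset.prod_nbij σb hσS hσinj hσsurj (fun a _ => rfl)
    rw [h2, h3, h4, zsmul_eq_mul]
    push_cast
    ring

end Statements
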